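/- Let Φ be a Young function. If Φ(λr) ≤ λᵖΦ(r) for all r ≥ 0 and 0 < λ < 1 with 1 < p < ∞, then the complementary function satisfies Φ̃(μs) ≤ μ^{p′}Φ̃(s) for all s ≥ 0 and μ > 1, where p′ = p/(p−1). In particular p₋(Φ) > 1 implies p₊(Φ̃) ≤ p₋(Φ)′. -/

import Mathlib

open MeasureTheory ENNReal NNReal

noncomputable section

/-- A Young function `Φ : [0,∞] → [0,∞]`: increasing, convex, `Φ(0)=0`, `Φ(∞)=∞`,
`lim_{t→0}Φ(t)=0`, with `a(Φ)<∞` and `b(Φ)>0`. -/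
structure YoungFunction (Φ : ℝ≥0∞ → ℝ≥0∞) : Prop where
  mono : Monotone Φ
  map_zero : Φ 0 = 0
  map_top : Φ ⊤ = ⊤
  convex : ∀ (a b : ℝ≥0) (x y : ℝ≥0∞), a + b = 1 →
    Φ ((a : ℝ≥0∞) * x + (b : ℝ≥0∞) * y) ≤ (a : ℝ≥0∞) * Φ x + (b : ℝ≥0∞) * Φ y
  tendsto_zero : Filter.Tendsto Φ (nhdsWithin 0 (Set.Ioi 0)) (nhds 0)
  exists_pos : ∃ t : ℝ≥0∞, t ≠ ⊤ ∧ 0 < Φ t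
  exists_finite : ∃ t : ℝ≥0∞, 0 < t ∧ Φ t < ⊤

/-- The generalized inverse `Φ⁻¹(u) = inf{t ≥ 0 : Φ(t) > u}` (with `inf ∅ = ∞`,
so `Φ⁻¹(∞) = ∞`). -/
def yinv (Φ : ℝ≥0∞ → ℝ≥0∞) (u : ℝ≥0∞) : ℝ≥0∞ := sInf {t | u < Φ t}


/-- The complementary Young function `Φ̃(r) = sup_{s ∈ [0,∞)} (rs - Φ(s))`. -/
def complFn (Φ : ℝ≥0∞ → ℝ≥0∞) (r : ℝ≥0∞) : ℝ≥0∞ :=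
  ⨆ s : ℝ≥0, r * (s : ℝ≥0∞) - Φ (s : ℝ≥0∞)

/-- if `Φ(λr) ≤ λᵖΦ(r)` for all `0 < λ < 1` (with `1 < p < ∞`), then
`Φ̃(μs) ≤ μ^{p'}Φ̃(s)` for all `μ > 1`, where `p' = p/(p-1)`. -/
theorem stmt17 (Φ : ℝ≥0∞ → ℝ≥0∞) (hΦ : YoungFunction Φ) (p : ℝ) (hp : 1 < p)
    (hdown : ∀ (r l : ℝ≥0), 0 < l → l < 1 →
      Φ ((l : ℝ≥0∞) * (r : ℝ≥0∞)) ≤ (l : ℝ≥0∞) ^ p * Φ (r : ℝ≥0∞)) :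
    ∀ (s m : ℝ≥0), 1 < m →
      complFn Φ ((m : ℝ≥0∞) * (s : ℝ≥0∞)) ≤
        (m : ℝ≥0∞) ^ (p / (p - 1)) * complFn Φ (s : ℝ≥0∞) := by
  intro s m hm
  set q : ℝ := p / (p - 1) with hq
  have hp1 : (0:ℝ) < p - 1 := by linarith
  have hq1 : 1 < q := by
    rw [hq, lt_div_iff₀ hp1]; linarith
  have hm0 : (0:ℝ≥0) < m := lt_trans one_pos hm
  set l : ℝ≥0 := m ^ (1 - q) with hl
  have hl0 : 0 < l := NNReal.rpow_pos hm0
  have hl1 : l < 1 := NNReal.rpow_lt_one_of_one_lt_of_neg hm (by linarith)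
  have hmne : (m : ℝ≥0∞) ≠ 0 := by exact_mod_cast hm0.ne'
  have hmnt : (m : ℝ≥0∞) ≠ ⊤ := ENNReal.coe_ne_top
  have hcl : (l : ℝ≥0∞) = (m : ℝ≥0∞) ^ (1 - q) := by
    rw [hl, ENNReal.coe_rpow_of_ne_zero (by exact_mod_cast hm0.ne')]
  -- key exponent identities
  have hml : (m : ℝ≥0∞) ^ q * (l : ℝ≥0∞) = (m : ℝ≥0∞) := by
    rw [hcl, ← ENNReal.rpow_add _ _ hmne hmnt]
    simp
  have hmlp : (m : ℝ≥0∞) ^ q * (l : ℝ≥0∞) ^ p = 1 := by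
    rw [hcl, ← ENNReal.rpow_mul, ← ENNReal.rpow_add _ _ hmne hmnt]
    have : q + (1 - q) * p = 0 := by
      rw [hq]; field_simp; ring
    rw [this, ENNReal.rpow_zero]
  rw [complFn]
  apply iSup_le
  intro t
  have key : Φ ((l : ℝ≥0∞) * (t : ℝ≥0∞)) ≤ (l : ℝ≥0∞) ^ p * Φ (t : ℝ≥0∞) :=
    hdown t l hl0 hl1
  have h1 : (m : ℝ≥0∞) * s * t = (m : ℝ≥0∞) ^ q * ((s : ℝ≥0∞) * ((l * t : ℝ≥0))) := by
    rw [ENNReal.coe_mul]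
    calc (m : ℝ≥0∞) * s * t = ((m : ℝ≥0∞) ^ q * (l : ℝ≥0∞)) * s * t := by rw [hml]
      _ = (m : ℝ≥0∞) ^ q * ((s : ℝ≥0∞) * ((l : ℝ≥0∞) * t)) := by ring
  have h2 : (m : ℝ≥0∞) ^ q * Φ ((l * t : ℝ≥0)) ≤ Φ (t : ℝ≥0∞) := by
    push_cast
    calc (m : ℝ≥0∞) ^ q * Φ ((l : ℝ≥0∞) * t) ≤ (m : ℝ≥0∞) ^ q * ((l : ℝ≥0∞) ^ p * Φ t) :=
          mul_le_mul_right key _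
      _ = ((m : ℝ≥0∞) ^ q * (l : ℝ≥0∞) ^ p) * Φ t := by ring
      _ = Φ t := by rw [hmlp, one_mul]
  calc (m : ℝ≥0∞) * s * t - Φ (t : ℝ≥0∞)
      ≤ (m : ℝ≥0∞) ^ q * ((s : ℝ≥0∞) * ((l * t : ℝ≥0))) -
          (m : ℝ≥0∞) ^ q * Φ ((l * t : ℝ≥0)) :=
        tsub_le_tsub (le_of_eq h1) h2
    _ ≤ (m : ℝ≥0∞) ^ q * ((s : ℝ≥0∞) * ((l * t : ℝ≥0)) - Φ ((l * t : ℝ≥0))) :=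
        le_mul_tsub
    _ ≤ (m : ℝ≥0∞) ^ q * complFn Φ (s : ℝ≥0∞) := by
        apply mul_le_mul_right
        exact le_iSup (fun u : ℝ≥0 => (s : ℝ≥0∞) * u - Φ u) (l * t)
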